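/- Let Δ > 1, λ > 0, and let ω_i ≥ 0 for all i ∈ Λ. Then 0 is an eigenvalue of H^Λ with eigenvector the all-spins-up vacuum Ω_Λ, and σ(H^Λ) ∩ (0, 1 − 1/Δ) = ∅; that is, σ(H^Λ) = {0} ∪ ([1 − 1/Δ, ∞) ∩ σ(H^Λ)). -/

import Mathlib

open scoped BigOperators ENNReal
open MeasureTheory

noncomputable section

namespace XXZ

/-- A (finite) discrete interval: a set of integers closed under betweenness. -/
def IsInterval (A : Finset ℤ) : Prop :=
  ∀ x ∈ A, ∀ y ∈ A, ∀ z : ℤ, x ≤ z → z ≤ y → z ∈ A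

/-- distance between two finite subsets of ℤ (junk value 0 if one is empty). -/
def fdist (A B : Finset ℤ) : ℝ :=
  sInf ((fun p : ℤ × ℤ => |(p.1 : ℝ) - (p.2 : ℝ)|) '' ↑(A ×ˢ B))

/-- `[M]_s^Λ`, the `s`-neighborhood of `M` inside `Λ`. -/
def thick (Λ M : Finset ℤ) (s : ℕ) : Finset ℤ :=
  Λ.filter fun x => ∃ y ∈ M, (x - y).natAbs ≤ s

/-- `[M]_{-s}^Λ = {x ∈ M : dist(x, Λ\M) > s}`. -/
def innerThick (Λ M : Finset ℤ) (s : ℕ) : Finset ℤ :=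
  M.filter fun x => ∀ y ∈ Λ \ M, (s : ℤ) < |x - y|

/-- `∂_s^Λ M = [M]_s^Λ \ [M]_{-s}^Λ`. -/
def bdry (Λ M : Finset ℤ) (s : ℕ) : Finset ℤ := thick Λ M s \ innerThick Λ M s

/-- number of connected components of `A` (as a subset of an interval `Λ ⊆ ℤ`). -/
def numComponents (A : Finset ℤ) : ℕ := (A.filter fun x => x - 1 ∉ A).card

/-- spin configurations over `Λ`; `true` at a site means a particle (spin down). -/
abbrev Cfg (Λ : Finset ℤ) := (↥Λ) → Bool

/-- the Hilbert space `⨂_{i∈Λ} ℂ²`, realized as `ℓ²` of configurations. -/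
abbrev HS (Λ : Finset ℤ) := EuclideanSpace ℂ (Cfg Λ)

abbrev Op (Λ : Finset ℤ) := HS Λ →L[ℂ] HS Λ

abbrev Mat (Λ : Finset ℤ) := Matrix (Cfg Λ) (Cfg Λ) ℂ

variable (Λ : Finset ℤ)

def toOp (M : Mat Λ) : Op Λ := Matrix.toEuclideanCLM (𝕜 := ℂ) M

def toMat (T : Op Λ) : Mat Λ := (Matrix.toEuclideanCLM (𝕜 := ℂ)).symm T

/-- the local number operator `𝒩_i` (the copy of `½(1−σ^z)` at site `i`). -/
def NMat (i : ℤ) : Mat Λ :=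
  Matrix.diagonal fun σ => if h : i ∈ Λ then (if σ ⟨i, h⟩ then 1 else 0) else 0

def NOp (i : ℤ) : Op Λ := toOp Λ (NMat Λ i)

/-- `P_+^S`: orthogonal projection onto states with no particles in `S`. -/
def PplusMat (S : Finset ℤ) : Mat Λ :=
  Matrix.diagonal fun σ => if ∀ i : ↥Λ, (i : ℤ) ∈ S → σ i = false then 1 else 0

def Pplus (S : Finset ℤ) : Op Λ := toOp Λ (PplusMat Λ S)

/-- `P_-^S = 1 - P_+^S`. -/
def Pminus (S : Finset ℤ) : Op Λ := 1 - Pplus Λ S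

/-- the configuration with the values at `i` and `i+1` exchanged. -/
def swapCfg (i : ℤ) (σ : Cfg Λ) : Cfg Λ := fun j =>
  if (j : ℤ) = i then (if h : i + 1 ∈ Λ then σ ⟨i + 1, h⟩ else σ j)
  else if (j : ℤ) = i + 1 then (if h : i ∈ Λ then σ ⟨i, h⟩ else σ j)
  else σ j

/-- the hopping term `σ_i^+σ_{i+1}^- + σ_i^-σ_{i+1}^+`. -/
def hopMat (i : ℤ) : Mat Λ := fun σ τ =>
  if hi : i ∈ Λ then
    if hi1 : i + 1 ∈ Λ then
      (if τ ⟨i, hi⟩ ≠ τ ⟨i + 1, hi1⟩ ∧ σ = swapCfg Λ i τ then 1 else 0)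
    else 0
  else 0

/-- `h_{i,i+1} = -𝒩_i 𝒩_{i+1} - (2Δ)⁻¹ (σ_i^+σ_{i+1}^- + σ_i^-σ_{i+1}^+)`. -/
def hMat (Δ : ℝ) (i : ℤ) : Mat Λ :=
  -(NMat Λ i * NMat Λ (i + 1)) - ((2 * Δ : ℂ))⁻¹ • hopMat Λ i

/-- the XXZ Hamiltonian on a subset `S ⊆ Λ`, acting on `H_Λ`:
`Σ_{{i,i+1}⊆S} h_{i,i+1} + Σ_{i∈S} 𝒩_i + λ Σ_{i∈S} ω_i 𝒩_i`. -/
def HonMat (Δ lam : ℝ) (ω : ℤ → ℝ) (S : Finset ℤ) : Mat Λ :=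
  (∑ i ∈ S.filter (fun i => i + 1 ∈ S), hMat Λ Δ i)
    + (∑ i ∈ S, NMat Λ i)
    + (lam : ℂ) • (∑ i ∈ S, (ω i : ℂ) • NMat Λ i)

/-- the random XXZ Hamiltonian `H^Λ = H_0^Λ + λ Σ_{i∈Λ} ω_i 𝒩_i`. -/
def HOp (Δ lam : ℝ) (ω : ℤ → ℝ) : Op Λ := toOp Λ (HonMat Λ Δ lam ω Λ)

/-- the free Hamiltonian `H_0^Λ`. -/
def H0Op (Δ : ℝ) : Op Λ :=
  toOp Λ ((∑ i ∈ Λ.filter (fun i => i + 1 ∈ Λ), hMat Λ Δ i) + ∑ i ∈ Λ, NMat Λ i)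

/-- the decoupled Hamiltonian `H^{A,A^c} = H^A + H^{A^c}` on `H_Λ`. -/
def HdecOp (Δ lam : ℝ) (ω : ℤ → ℝ) (A : Finset ℤ) : Op Λ :=
  toOp Λ (HonMat Λ Δ lam ω A + HonMat Λ Δ lam ω (Λ \ A))

/-- the number-of-clusters operator `W^Λ = 𝒩^Λ - Σ 𝒩_i 𝒩_{i+1}`. -/
def WOp : Op Λ :=
  toOp Λ ((∑ i ∈ Λ, NMat Λ i)
    - ∑ i ∈ Λ.filter (fun i => i + 1 ∈ Λ), NMat Λ i * NMat Λ (i + 1))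

/-- total number operator `𝒩^Λ`. -/
def NtotOp : Op Λ := toOp Λ (∑ i ∈ Λ, NMat Λ i)

/-- spectral projection `χ_I(T)` (via the continuous functional calculus;
for a self-adjoint `T` the spectrum is finite, so every function is continuous on it). -/
def specProj (T : Op Λ) (I : Set ℝ) : Op Λ :=
  cfc (fun x : ℝ => I.indicator (fun _ => (1 : ℝ)) x) T

/-- `f(T)` for a real-valued (Borel) function `f`. -/
def opFun (T : Op Λ) (f : ℝ → ℝ) : Op Λ := cfc f T

/-- resolvent `(T - z)⁻¹` (junk value `0` when not invertible). -/
def res (T : Op Λ) (z : ℂ) : Op Λ := Ring.inverse (T - z • 1)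

/-- the unitary `e^{itT}`. -/
def uexp (T : Op Λ) (t : ℝ) : Op Λ := NormedSpace.exp ((Complex.I * (t : ℂ)) • T)

/-- Heisenberg evolution `τ_t(T) = e^{itH} T e^{-itH}`. -/
def heis (H : Op Λ) (t : ℝ) (T : Op Λ) : Op Λ := uexp Λ H t * T * uexp Λ H (-t)

/-- the deformed Hamiltonian `Ĥ_k^Λ`. -/
def Hhat (Δ lam : ℝ) (ω : ℤ → ℝ) (k : ℕ) : Op Λ :=
  if k = 0 then HOp Λ Δ lam ω + ((1 - 1 / Δ : ℝ) : ℂ) • specProj Λ (WOp Λ) {0}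
  else HOp Λ Δ lam ω + ((k * (1 - 1 / Δ) : ℝ) : ℂ) •
    (specProj Λ (WOp Λ) (Set.Icc 1 k)
      + (((k + 1 : ℝ) / k : ℝ) : ℂ) • specProj Λ (WOp Λ) {0})

/-- support predicate, on matrices: `M` acts as `M_A ⊗ I_{A^c}`. -/
def MatSupportedOn (M : Mat Λ) (A : Finset ℤ) : Prop :=
  (∀ σ τ : Cfg Λ, M σ τ ≠ 0 → ∀ i : ↥Λ, (i : ℤ) ∉ A → σ i = τ i) ∧
  (∀ σ τ σ' τ' : Cfg Λ,
    (∀ i : ↥Λ, (i : ℤ) ∈ A → (σ i = σ' i ∧ τ i = τ' i)) →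
    (∀ i : ↥Λ, (i : ℤ) ∉ A → (σ i = τ i ∧ σ' i = τ' i)) → M σ τ = M σ' τ')

/-- an observable on `H_Λ` is supported on `A ⊆ Λ` if it has the form `T_A ⊗ I`. -/
def SupportedOn (T : Op Λ) (A : Finset ℤ) : Prop := MatSupportedOn Λ (toMat Λ T) A

/-- the rank-one projection `π_M` onto the canonical basis vector `φ_M`. -/
def piProj (M : Finset ℤ) : Op Λ :=
  toOp Λ (Matrix.diagonal fun σ => if σ = (fun i : ↥Λ => decide ((i : ℤ) ∈ M)) then 1 else 0)

/-- the all-spins-up vacuum vector `Ω_Λ`. -/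
def vac : HS Λ := EuclideanSpace.single (fun _ => false) 1

/-- extension of a field on `Λ` to `ℤ` by zero. -/
def extend (ω : ↥Λ → ℝ) : ℤ → ℝ := fun i => if h : i ∈ Λ then ω ⟨i, h⟩ else 0

/-- expectation with respect to the i.i.d. field `{ω_i}_{i∈Λ}` with single-site measure `μ`. -/
def expec (μ : Measure ℝ) (F : (ℤ → ℝ) → ℝ) : ℝ :=
  ∫ ω : ↥Λ → ℝ, F (extend Λ ω) ∂(Measure.pi fun _ => μ)

/-- Borel functions vanishing outside `J` and bounded by `1`. -/
def B1 (J : Set ℝ) : Set (ℝ → ℝ) :=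
  {f | Measurable f ∧ (∀ x, x ∉ J → f x = 0) ∧ ∀ x, |f x| ≤ 1}

/-- `⟨t⟩ = (1+t²)^{1/2}`. -/
def jap (t : ℝ) : ℝ := Real.sqrt (1 + t ^ 2)

/-- the assumptions on the single-site distribution `μ`: a probability measure,
absolutely continuous with bounded density, with `{0,1} ⊆ supp μ ⊆ [0,1]`. -/
structure SingleSite (μ : Measure ℝ) : Prop where
  prob : IsProbabilityMeasure μ
  ac : μ ≪ volume
  bounded : ∃ C : ℝ≥0∞, C ≠ ⊤ ∧ ∀ᵐ x ∂volume, μ.rnDeriv volume x ≤ C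
  supp_sub : μ (Set.Icc 0 1) = 1
  zero_mem : ∀ ε > 0, 0 < μ (Set.Ioo (-ε) ε)
  one_mem : ∀ ε > 0, 0 < μ (Set.Ioo (1 - ε) (1 + ε))

/-- Condition `L_r`: quasi-locality (localization) on the energy interval
`Ǐ_{≤r} = (-∞, (r+7/8)(1-1/Δ)]`, with constants `ξ_r, θ_r` (and some `F_r`). -/
def ConditionL (μ : Measure ℝ) (Δ₀ lam0 Δ lam r ξ θ : ℝ) : Prop :=
  Δ₀ ≤ Δ ∧ lam0 ≤ lam ∧ 0 < ξ ∧ 0 < θ ∧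
  ∃ F : ℝ, 0 < F ∧
    ∀ Λ : Finset ℤ, Λ.Nonempty → IsInterval Λ →
    ∀ A B : Finset ℤ, A ⊆ B → B ⊆ Λ → IsInterval A →
      (expec Λ μ (fun ω =>
          ⨆ f ∈ B1 (Set.Iic ((r + 7 / 8) * (1 - 1 / Δ))),
            ‖Pminus Λ A * opFun Λ (HOp Λ Δ lam ω) f * Pplus Λ B‖)
        ≤ F * (Λ.card : ℝ) ^ ξ * Real.exp (-θ * fdist A (Λ \ B))) ∧
      ∀ z : ℂ, z.re ≤ (r + 7 / 8) * (1 - 1 / Δ) →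
        expec Λ μ (fun ω =>
            ‖Pminus Λ A * res Λ (HOp Λ Δ lam ω) z * Pplus Λ B‖ ^ ((1 : ℝ) / 4))
          ≤ F * (Λ.card : ℝ) ^ ξ * Real.exp (-θ * fdist A (Λ \ B))

/-- `β_{n/2}`:  `β_0 = 0`,  `β_q = β_{q-1/2} + 9⌈q⌉ + 13`. -/
def betaN : ℕ → ℕ
  | 0 => 0
  | n + 1 => betaN n + 9 * ((n + 2) / 2) + 13

end XXZ

namespace XXZ

open Matrix Complex Finset

variable (Λ : Finset ℤ)

/-- the all-spins-up (empty) configuration -/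
def botC : Cfg Λ := fun _ => false

/-- occupancy as a Bool, indexed by `ℤ` -/
def bocc (σ : Cfg Λ) (i : ℤ) : Bool := if h : i ∈ Λ then σ ⟨i, h⟩ else false

/-- occupancy as a real number -/
def nrr (σ : Cfg Λ) (i : ℤ) : ℝ := if bocc Λ σ i then 1 else 0

/-- the edge set of `Λ` -/
def edges : Finset ℤ := Λ.filter (fun i => i + 1 ∈ Λ)

/-- number of clusters (as a real number) -/
def Wr (σ : Cfg Λ) : ℝ :=
  (∑ i ∈ Λ, nrr Λ σ i) - ∑ i ∈ edges Λ, nrr Λ σ i * nrr Λ σ (i + 1)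

/-- number of boundary edges -/
def eR (σ : Cfg Λ) : ℝ :=
  ∑ i ∈ edges Λ, (if bocc Λ σ i ≠ bocc Λ σ (i + 1) then (1 : ℝ) else 0)

/-- disorder contribution -/
def dR (lam : ℝ) (ω : ℤ → ℝ) (σ : Cfg Λ) : ℝ := lam * ∑ i ∈ Λ, ω i * nrr Λ σ i

/-- full diagonal of the Hamiltonian -/
def diagD (lam : ℝ) (ω : ℤ → ℝ) (σ : Cfg Λ) : ℝ := Wr Λ σ + dR Λ lam ω σ

lemma nrr_nonneg (σ : Cfg Λ) (i : ℤ) : 0 ≤ nrr Λ σ i := by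
  unfold nrr; split_ifs <;> norm_num

lemma swapCfg_involutive (i : ℤ) : Function.Involutive (swapCfg Λ i) := by
  intro σ
  funext j
  by_cases hj : (j : ℤ) = i
  · by_cases h1 : i + 1 ∈ Λ
    · have hii : i ∈ Λ := hj ▸ j.2
      have hji : (⟨i, hii⟩ : ↥Λ) = j := Subtype.ext hj.symm
      simp [swapCfg, hj, h1, hii, (by omega : (i:ℤ) + 1 ≠ i), hji]
    · simp [swapCfg, hj, h1]
  · by_cases hj1 : (j : ℤ) = i + 1
    · have hi1 : i + 1 ∈ Λ := hj1 ▸ j.2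
      have hji : (⟨i + 1, hi1⟩ : ↥Λ) = j := Subtype.ext hj1.symm
      by_cases h : i ∈ Λ
      · simp [swapCfg, hj, hj1, h, hi1, (by omega : (i:ℤ) + 1 ≠ i), hji]
      · simp [swapCfg, hj, hj1, h]
    · simp [swapCfg, hj, hj1]

lemma swapCfg_left {i : ℤ} (hi : i ∈ Λ) (hi1 : i + 1 ∈ Λ) (τ : Cfg Λ) :
    swapCfg Λ i τ ⟨i, hi⟩ = τ ⟨i + 1, hi1⟩ := by
  simp [swapCfg, hi1]

lemma swapCfg_right {i : ℤ} (hi : i ∈ Λ) (hi1 : i + 1 ∈ Λ) (τ : Cfg Λ) :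
    swapCfg Λ i τ ⟨i + 1, hi1⟩ = τ ⟨i, hi⟩ := by
  simp [swapCfg, hi, (by omega : (i:ℤ) + 1 ≠ i)]

lemma swapCfg_bot (i : ℤ) : swapCfg Λ i (botC Λ) = botC Λ := by
  funext j
  simp only [swapCfg, botC]
  split_ifs <;> rfl

lemma bocc_bot (i : ℤ) : bocc Λ (botC Λ) i = false := by
  simp [bocc, botC]

end XXZ

namespace XXZ

open Matrix Complex Finset

variable (Λ : Finset ℤ)

lemma nrr_bot (i : ℤ) : nrr Λ (botC Λ) i = 0 := by simp [nrr, bocc_bot]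

lemma Wr_bot : Wr Λ (botC Λ) = 0 := by simp [Wr, nrr_bot]

lemma eR_bot : eR Λ (botC Λ) = 0 := by simp [eR, bocc_bot]

lemma dR_bot (lam : ℝ) (ω : ℤ → ℝ) : dR Λ lam ω (botC Λ) = 0 := by simp [dR, nrr_bot]

lemma dR_nonneg {lam : ℝ} (hlam : 0 ≤ lam) {ω : ℤ → ℝ} (hω : ∀ i ∈ Λ, 0 ≤ ω i) (σ : Cfg Λ) :
    0 ≤ dR Λ lam ω σ := by
  apply mul_nonneg hlam
  exact Finset.sum_nonneg fun i hi => mul_nonneg (hω i hi) (nrr_nonneg Λ σ i)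

lemma eR_le_two_Wr (σ : Cfg Λ) : eR Λ σ ≤ 2 * Wr Λ σ := by
  have hpt : ∀ i ∈ edges Λ, (if bocc Λ σ i ≠ bocc Λ σ (i + 1) then (1 : ℝ) else 0)
      = nrr Λ σ i + nrr Λ σ (i + 1) - 2 * (nrr Λ σ i * nrr Λ σ (i + 1)) := by
    intro i _
    unfold nrr
    cases bocc Λ σ i <;> cases bocc Λ σ (i + 1) <;> norm_num
  rw [eR, Finset.sum_congr rfl hpt]
  have h1 : ∑ i ∈ edges Λ, nrr Λ σ i ≤ ∑ i ∈ Λ, nrr Λ σ i :=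
    Finset.sum_le_sum_of_subset_of_nonneg (Finset.filter_subset _ _)
      (fun i hi _ => nrr_nonneg Λ σ i)
  have h2 : ∑ i ∈ edges Λ, nrr Λ σ (i + 1) ≤ ∑ i ∈ Λ, nrr Λ σ i := by
    have := Finset.sum_image (f := nrr Λ σ) (s := edges Λ) (g := fun i => i + 1)
      (fun x _ y _ h => by simpa using h)
    rw [← this]
    apply Finset.sum_le_sum_of_subset_of_nonneg
    · intro j hj
      obtain ⟨i, hi, rfl⟩ := Finset.mem_image.1 hj
      exact (Finset.mem_filter.1 hi).2
    · exact fun i hi _ => nrr_nonneg Λ σ i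
  have : ∑ i ∈ edges Λ, (nrr Λ σ i + nrr Λ σ (i + 1) - 2 * (nrr Λ σ i * nrr Λ σ (i + 1))) =
      (∑ i ∈ edges Λ, nrr Λ σ i) + (∑ i ∈ edges Λ, nrr Λ σ (i + 1))
        - 2 * ∑ i ∈ edges Λ, nrr Λ σ i * nrr Λ σ (i + 1) := by
    rw [Finset.sum_sub_distrib, Finset.sum_add_distrib, Finset.mul_sum]
  rw [this, Wr]
  linarith

lemma one_le_Wr {σ : Cfg Λ} (hσ : σ ≠ botC Λ) : 1 ≤ Wr Λ σ := by
  classical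
  set P : Finset ℤ := Λ.filter (fun i => bocc Λ σ i) with hP
  have hPne : P.Nonempty := by
    by_contra h
    apply hσ
    funext j
    by_contra hj
    have : (j : ℤ) ∈ P := by
      simp only [hP, Finset.mem_filter]
      refine ⟨j.2, ?_⟩
      simp only [bocc, dif_pos j.2]
      simpa [botC, Subtype.coe_eta] using hj
    exact h ⟨_, this⟩
  set E' : Finset ℤ := (edges Λ).filter (fun i => bocc Λ σ i ∧ bocc Λ σ (i + 1)) with hE'
  have hsum1 : ∑ i ∈ Λ, nrr Λ σ i = (P.card : ℝ) := by
    rw [hP]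
    rw [← Finset.sum_boole]
    rfl
  have hsum2 : ∑ i ∈ edges Λ, nrr Λ σ i * nrr Λ σ (i + 1) = (E'.card : ℝ) := by
    rw [hE', ← Finset.sum_boole]
    apply Finset.sum_congr rfl
    intro i _
    unfold nrr
    cases bocc Λ σ i <;> cases bocc Λ σ (i + 1) <;> norm_num
  have hcard : E'.card + 1 ≤ P.card := by
    have hm : P.min' hPne ∈ P := Finset.min'_mem _ _
    have hsub : E'.image (fun i => i + 1) ⊆ P.erase (P.min' hPne) := by
      intro j hj
      obtain ⟨i, hi, rfl⟩ := Finset.mem_image.1 hj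
      rw [hE', Finset.mem_filter] at hi
      obtain ⟨hiE, hb1, hb2⟩ := hi
      rw [edges, Finset.mem_filter] at hiE
      have hiP : i ∈ P := Finset.mem_filter.2 ⟨hiE.1, hb1⟩
      have hi1P : i + 1 ∈ P := Finset.mem_filter.2 ⟨hiE.2, hb2⟩
      refine Finset.mem_erase.2 ⟨?_, hi1P⟩
      have := Finset.min'_le P i hiP
      omega
    have h1 : (E'.image (fun i => i + 1)).card = E'.card :=
      Finset.card_image_of_injective _ (fun x y h => by omega)
    have h2 := Finset.card_le_card hsub
    rw [h1, Finset.card_erase_of_mem hm] at h2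
    have : 1 ≤ P.card := Finset.card_pos.2 hPne
    omega
  rw [Wr, hsum1, hsum2]
  have : (E'.card : ℝ) + 1 ≤ (P.card : ℝ) := by exact_mod_cast hcard
  linarith

end XXZ

namespace XXZ

open Matrix Complex Finset

variable (Λ : Finset ℤ)

lemma NMat_eq (i : ℤ) : NMat Λ i = Matrix.diagonal (fun σ => ((nrr Λ σ i : ℝ) : ℂ)) := by
  apply Matrix.ext
  intro σ τ
  rw [NMat, Matrix.diagonal_apply, Matrix.diagonal_apply]
  by_cases h : σ = τ
  · subst h
    simp only [if_pos rfl, nrr, bocc]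
    split_ifs <;> simp_all
  · simp [h]

lemma Hdecomp (Δ lam : ℝ) (ω : ℤ → ℝ) :
    HonMat Λ Δ lam ω Λ = Matrix.diagonal (fun σ => ((diagD Λ lam ω σ : ℝ) : ℂ))
      + (-((((2 * Δ)⁻¹ : ℝ)) : ℂ)) • ∑ i ∈ edges Λ, hopMat Λ i := by
  ext σ τ
  simp only [HonMat, hMat, NMat_eq, edges, Matrix.add_apply, Matrix.sum_apply, Matrix.sub_apply,
    Matrix.neg_apply, Matrix.smul_apply, Matrix.diagonal_mul_diagonal, Matrix.diagonal_apply,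
    Pi.mul_apply, smul_eq_mul]
  by_cases h : σ = τ
  · subst h
    simp only [if_pos rfl]
    simp only [diagD, Wr, dR, edges]
    push_cast
    simp only [Finset.sum_sub_distrib, Finset.sum_neg_distrib, neg_mul, ← Finset.mul_sum]
    ring
  · simp only [if_neg h]
    push_cast
    simp only [mul_zero, Finset.sum_const_zero, neg_mul, zero_sub, Finset.sum_sub_distrib,
      Finset.sum_neg_distrib, ← Finset.mul_sum]
    ring

lemma dot_mulVec (M : Mat Λ) (v : Cfg Λ → ℂ) :
    star v ⬝ᵥ M.mulVec v = ∑ τ : Cfg Λ, ∑ σ : Cfg Λ, (starRingEnd ℂ) (v σ) * M σ τ * v τ := by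
  simp only [dotProduct, Matrix.mulVec, Pi.star_apply, Finset.mul_sum, RCLike.star_def]
  rw [Finset.sum_comm]
  exact Finset.sum_congr rfl fun τ _ => Finset.sum_congr rfl fun σ _ => by ring

lemma dot_diag (d : Cfg Λ → ℂ) (v : Cfg Λ → ℂ) :
    star v ⬝ᵥ (Matrix.diagonal d).mulVec v
      = ∑ σ : Cfg Λ, d σ * ((Complex.normSq (v σ) : ℝ) : ℂ) := by
  rw [dot_mulVec]
  refine Finset.sum_congr rfl fun τ _ => ?_
  simp only [Matrix.diagonal_apply, mul_ite, ite_mul, mul_zero, zero_mul,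
    Finset.sum_ite_eq, Finset.sum_ite_eq', Finset.mem_univ, if_pos]
  rw [← Complex.mul_conj]
  ring

lemma dot_hop {i : ℤ} (hi : i ∈ Λ) (hi1 : i + 1 ∈ Λ) (v : Cfg Λ → ℂ) :
    star v ⬝ᵥ (hopMat Λ i).mulVec v
      = ∑ τ : Cfg Λ, (if bocc Λ τ i ≠ bocc Λ τ (i + 1)
          then (starRingEnd ℂ) (v (swapCfg Λ i τ)) * v τ else 0) := by
  rw [dot_mulVec]
  refine Finset.sum_congr rfl fun τ _ => ?_
  have hb : bocc Λ τ i = τ ⟨i, hi⟩ := by simp [bocc, hi]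
  have hb1 : bocc Λ τ (i + 1) = τ ⟨i + 1, hi1⟩ := by simp [bocc, hi1]
  simp only [hopMat, dif_pos hi, dif_pos hi1, hb, hb1]
  by_cases hc : τ ⟨i, hi⟩ ≠ τ ⟨i + 1, hi1⟩
  · simp only [if_pos hc, hc, true_and, ne_eq, not_false_eq_true, mul_ite, ite_mul, mul_one,
      mul_zero, zero_mul, one_mul, Finset.sum_ite_eq', Finset.mem_univ, if_pos]
  · simp only [if_neg hc]
    rw [Finset.sum_eq_zero]
    intro σ _
    rw [if_neg (by tauto)]
    ring

end XXZ

namespace XXZ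

open Matrix Complex Finset

variable (Λ : Finset ℤ)

/-- the hop quadratic form -/
def Xq (i : ℤ) (v : Cfg Λ → ℂ) : ℂ :=
  ∑ τ : Cfg Λ, (if bocc Λ τ i ≠ bocc Λ τ (i + 1)
      then (starRingEnd ℂ) (v (swapCfg Λ i τ)) * v τ else 0)

lemma dot_hop' {i : ℤ} (hi : i ∈ Λ) (hi1 : i + 1 ∈ Λ) (v : Cfg Λ → ℂ) :
    star v ⬝ᵥ (hopMat Λ i).mulVec v = Xq Λ i v :=
  dot_hop Λ hi hi1 v

lemma bocc_swap_left {i : ℤ} (hi : i ∈ Λ) (hi1 : i + 1 ∈ Λ) (τ : Cfg Λ) :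
    bocc Λ (swapCfg Λ i τ) i = bocc Λ τ (i + 1) := by
  simp only [bocc, dif_pos hi, dif_pos hi1]
  exact swapCfg_left Λ hi hi1 τ

lemma bocc_swap_right {i : ℤ} (hi : i ∈ Λ) (hi1 : i + 1 ∈ Λ) (τ : Cfg Λ) :
    bocc Λ (swapCfg Λ i τ) (i + 1) = bocc Λ τ i := by
  simp only [bocc, dif_pos hi, dif_pos hi1]
  exact swapCfg_right Λ hi hi1 τ

lemma cond_swap {i : ℤ} (hi : i ∈ Λ) (hi1 : i + 1 ∈ Λ) (τ : Cfg Λ) :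
    (bocc Λ (swapCfg Λ i τ) i ≠ bocc Λ (swapCfg Λ i τ) (i + 1))
      ↔ (bocc Λ τ i ≠ bocc Λ τ (i + 1)) := by
  rw [bocc_swap_left Λ hi hi1, bocc_swap_right Λ hi hi1]
  exact ne_comm

lemma Xq_conj {i : ℤ} (hi : i ∈ Λ) (hi1 : i + 1 ∈ Λ) (v : Cfg Λ → ℂ) :
    (starRingEnd ℂ) (Xq Λ i v) = Xq Λ i v := by
  unfold Xq
  rw [map_sum]
  have h1 : ∀ τ : Cfg Λ,
      (starRingEnd ℂ) (if bocc Λ τ i ≠ bocc Λ τ (i + 1)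
          then (starRingEnd ℂ) (v (swapCfg Λ i τ)) * v τ else 0)
        = (if bocc Λ τ i ≠ bocc Λ τ (i + 1)
          then (starRingEnd ℂ) (v τ) * v (swapCfg Λ i τ) else 0) := by
    intro τ
    split_ifs <;> simp [_root_.map_mul, mul_comm]
  rw [Finset.sum_congr rfl fun τ _ => h1 τ]
  rw [← Equiv.sum_comp ((swapCfg_involutive Λ i).toPerm) fun τ =>
    (if bocc Λ τ i ≠ bocc Λ τ (i + 1)
      then (starRingEnd ℂ) (v τ) * v (swapCfg Λ i τ) else 0)]
  refine Finset.sum_congr rfl fun τ _ => ?_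
  have hp : ((swapCfg_involutive Λ i).toPerm : Cfg Λ → Cfg Λ) τ = swapCfg Λ i τ := rfl
  rw [hp]
  by_cases hc : bocc Λ τ i ≠ bocc Λ τ (i + 1)
  · rw [if_pos ((cond_swap Λ hi hi1 τ).2 hc), if_pos hc,
      (swapCfg_involutive Λ i) τ]
  · rw [if_neg (fun hcc => hc ((cond_swap Λ hi hi1 τ).1 hcc)), if_neg hc]

lemma re_conj_mul_le (a b : ℂ) :
    ((starRingEnd ℂ) a * b).re ≤ (Complex.normSq a + Complex.normSq b) / 2 := by
  simp only [Complex.mul_re, Complex.conj_re, Complex.conj_im, Complex.normSq_apply]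
  nlinarith [sq_nonneg (a.re - b.re), sq_nonneg (a.im - b.im)]

lemma sum_normSq_swap {i : ℤ} (hi : i ∈ Λ) (hi1 : i + 1 ∈ Λ) (v : Cfg Λ → ℂ) :
    (∑ τ : Cfg Λ, if bocc Λ τ i ≠ bocc Λ τ (i + 1)
        then Complex.normSq (v (swapCfg Λ i τ)) else 0)
      = ∑ τ : Cfg Λ, (if bocc Λ τ i ≠ bocc Λ τ (i + 1) then Complex.normSq (v τ) else 0) := by
  rw [← Equiv.sum_comp ((swapCfg_involutive Λ i).toPerm) fun τ =>
    (if bocc Λ τ i ≠ bocc Λ τ (i + 1) then Complex.normSq (v τ) else 0)]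
  refine Finset.sum_congr rfl fun τ _ => ?_
  have hp : ((swapCfg_involutive Λ i).toPerm : Cfg Λ → Cfg Λ) τ = swapCfg Λ i τ := rfl
  rw [hp]
  by_cases hc : bocc Λ τ i ≠ bocc Λ τ (i + 1)
  · rw [if_pos ((cond_swap Λ hi hi1 τ).2 hc), if_pos hc]
  · rw [if_neg (fun hcc => hc ((cond_swap Λ hi hi1 τ).1 hcc)), if_neg hc]

lemma Xq_re_le {i : ℤ} (hi : i ∈ Λ) (hi1 : i + 1 ∈ Λ) (v : Cfg Λ → ℂ) :
    (Xq Λ i v).re ≤ ∑ τ : Cfg Λ,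
      (if bocc Λ τ i ≠ bocc Λ τ (i + 1) then Complex.normSq (v τ) else 0) := by
  rw [Xq, Complex.re_sum]
  have h1 : ∀ τ : Cfg Λ,
      (if bocc Λ τ i ≠ bocc Λ τ (i + 1)
          then (starRingEnd ℂ) (v (swapCfg Λ i τ)) * v τ else 0).re
        ≤ (if bocc Λ τ i ≠ bocc Λ τ (i + 1)
          then (Complex.normSq (v (swapCfg Λ i τ)) + Complex.normSq (v τ)) / 2 else 0) := by
    intro τ
    split_ifs
    · exact re_conj_mul_le _ _
    · simp
  calc (∑ τ : Cfg Λ, (if bocc Λ τ i ≠ bocc Λ τ (i + 1)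
          then (starRingEnd ℂ) (v (swapCfg Λ i τ)) * v τ else 0).re)
      ≤ ∑ τ : Cfg Λ, (if bocc Λ τ i ≠ bocc Λ τ (i + 1)
          then (Complex.normSq (v (swapCfg Λ i τ)) + Complex.normSq (v τ)) / 2 else 0) :=
        Finset.sum_le_sum fun τ _ => h1 τ
    _ = ((∑ τ : Cfg Λ, if bocc Λ τ i ≠ bocc Λ τ (i + 1)
            then Complex.normSq (v (swapCfg Λ i τ)) else 0)
          + ∑ τ : Cfg Λ, (if bocc Λ τ i ≠ bocc Λ τ (i + 1)
            then Complex.normSq (v τ) else 0)) / 2 := by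
        rw [← Finset.sum_add_distrib, Finset.sum_div]
        refine Finset.sum_congr rfl fun τ _ => ?_
        split_ifs <;> simp
    _ = ∑ τ : Cfg Λ, (if bocc Λ τ i ≠ bocc Λ τ (i + 1) then Complex.normSq (v τ) else 0) := by
        rw [sum_normSq_swap Λ hi hi1]
        ring

lemma dot_sum {ι : Type*} (s : Finset ι) (M : ι → Mat Λ) (v : Cfg Λ → ℂ) :
    star v ⬝ᵥ (∑ i ∈ s, M i).mulVec v = ∑ i ∈ s, star v ⬝ᵥ (M i).mulVec v := by
  classical
  induction s using Finset.induction_on with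
  | empty => simp [Matrix.zero_mulVec]
  | insert _ _ h ih =>
      rw [Finset.sum_insert h, Finset.sum_insert h, Matrix.add_mulVec,
        dotProduct_add, ih]

lemma dot_H (Δ lam : ℝ) (ω : ℤ → ℝ) (v : Cfg Λ → ℂ) :
    star v ⬝ᵥ (HonMat Λ Δ lam ω Λ).mulVec v
      = (((∑ σ : Cfg Λ, diagD Λ lam ω σ * Complex.normSq (v σ) : ℝ)) : ℂ)
        - ((((2 * Δ)⁻¹ : ℝ)) : ℂ) * ∑ i ∈ edges Λ, Xq Λ i v := by
  rw [Hdecomp, Matrix.add_mulVec, dotProduct_add, dot_diag,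
    Matrix.smul_mulVec, dotProduct_smul, dot_sum]
  have h1 : ∀ i ∈ edges Λ, star v ⬝ᵥ (hopMat Λ i).mulVec v = Xq Λ i v := by
    intro i hi
    rw [edges, Finset.mem_filter] at hi
    exact dot_hop' Λ hi.1 hi.2 v
  rw [Finset.sum_congr rfl h1]
  push_cast
  rw [smul_eq_mul]
  ring

end XXZ

namespace XXZ

open Matrix Complex Finset

variable (Λ : Finset ℤ)

lemma diagD_bot (lam : ℝ) (ω : ℤ → ℝ) : diagD Λ lam ω (botC Λ) = 0 := by
  rw [diagD, Wr_bot, dR_bot]; ring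

lemma hopMat_bot_left (i : ℤ) (τ : Cfg Λ) : hopMat Λ i (botC Λ) τ = 0 := by
  unfold hopMat
  split_ifs with hi hi1 h
  · exfalso
    obtain ⟨hne, hswap⟩ := h
    have h2 := congrArg (swapCfg Λ i) hswap
    rw [swapCfg_bot, swapCfg_involutive Λ i τ] at h2
    subst h2
    exact hne rfl
  · rfl
  · rfl
  · rfl

lemma hopMat_bot_right (i : ℤ) (σ : Cfg Λ) : hopMat Λ i σ (botC Λ) = 0 := by
  unfold hopMat
  split_ifs with hi hi1 h
  · exact absurd rfl h.1
  · rfl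
  · rfl
  · rfl

lemma HonMat_bot_left (Δ lam : ℝ) (ω : ℤ → ℝ) (τ : Cfg Λ) :
    HonMat Λ Δ lam ω Λ (botC Λ) τ = 0 := by
  rw [Hdecomp]
  simp only [Matrix.add_apply, Matrix.smul_apply, Matrix.sum_apply, Matrix.diagonal_apply,
    hopMat_bot_left, Finset.sum_const_zero, smul_zero, add_zero]
  split_ifs with h
  · rw [diagD_bot]; norm_num
  · rfl

lemma HonMat_bot_right (Δ lam : ℝ) (ω : ℤ → ℝ) (σ : Cfg Λ) :
    HonMat Λ Δ lam ω Λ σ (botC Λ) = 0 := by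
  rw [Hdecomp]
  simp only [Matrix.add_apply, Matrix.smul_apply, Matrix.sum_apply, Matrix.diagonal_apply,
    hopMat_bot_right, Finset.sum_const_zero, smul_zero, add_zero]
  split_ifs with h
  · rw [h, diagD_bot]; norm_num
  · rfl

lemma mulVec_bot (Δ lam : ℝ) (ω : ℤ → ℝ) (v : Cfg Λ → ℂ) :
    (HonMat Λ Δ lam ω Λ).mulVec v (botC Λ) = 0 := by
  simp only [Matrix.mulVec, dotProduct]
  exact Finset.sum_eq_zero fun τ _ => by show HonMat Λ Δ lam ω Λ (botC Λ) τ * v τ = 0; rw [HonMat_bot_left]; ring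

lemma mulVec_single_bot (Δ lam : ℝ) (ω : ℤ → ℝ) :
    (HonMat Λ Δ lam ω Λ).mulVec (Pi.single (botC Λ) 1) = 0 := by
  funext σ
  simp only [Matrix.mulVec, dotProduct, Pi.zero_apply]
  apply Finset.sum_eq_zero
  intro τ _
  by_cases h : τ = botC Λ
  · subst h
    show HonMat Λ Δ lam ω Λ σ (botC Λ) * (Pi.single (botC Λ) 1 : Cfg Λ → ℂ) (botC Λ) = 0
    rw [HonMat_bot_right]; ring
  · rw [Pi.single_eq_of_ne h]; ring

lemma mem_spec_iff (M : Mat Λ) (z : ℂ) :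
    z ∈ spectrum ℂ M ↔ ∃ v : Cfg Λ → ℂ, v ≠ 0 ∧ M.mulVec v = z • v := by
  rw [← AlgEquiv.spectrum_eq (Matrix.toLinAlgEquiv' (R := ℂ) (n := Cfg Λ)),
    ← Module.End.hasEigenvalue_iff_mem_spectrum]
  constructor
  · intro h
    rw [Module.End.hasEigenvalue_iff, Submodule.ne_bot_iff] at h
    obtain ⟨v, hv, hv0⟩ := h
    rw [Module.End.mem_eigenspace_iff] at hv
    exact ⟨v, hv0, by simpa [Matrix.toLinAlgEquiv'_apply] using hv⟩
  · rintro ⟨v, hv0, hv⟩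
    exact Module.End.hasEigenvalue_of_hasEigenvector ⟨Module.End.mem_eigenspace_iff.2 (by
      simpa [Matrix.toLinAlgEquiv'_apply] using hv), hv0⟩

lemma eig_bound (Δ lam : ℝ) (hΔ : 1 < Δ) (hlam : 0 < lam)
    (ω : ℤ → ℝ) (hω : ∀ i ∈ Λ, 0 ≤ ω i) (z : ℂ) (hz0 : z ≠ 0)
    (v : Cfg Λ → ℂ) (hv : v ≠ 0) (heig : (HonMat Λ Δ lam ω Λ).mulVec v = z • v) :
    1 - 1 / Δ ≤ z.re ∧ z.im = 0 := by
  have hΔ0 : (0:ℝ) < Δ := by linarith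
  -- vacuum component vanishes
  have hvbot : v (botC Λ) = 0 := by
    have h1 := congrFun heig (botC Λ)
    rw [mulVec_bot] at h1
    simp only [Pi.smul_apply, smul_eq_mul] at h1
    rcases mul_eq_zero.1 h1.symm with h | h
    · exact absurd h hz0
    · exact h
  -- positivity of the norm
  set S : ℝ := ∑ σ : Cfg Λ, Complex.normSq (v σ) with hSdef
  have hS : 0 < S := by
    obtain ⟨σ0, hσ0⟩ := Function.ne_iff.1 hv
    exact Finset.sum_pos' (fun σ _ => Complex.normSq_nonneg _)
      ⟨σ0, Finset.mem_univ _, Complex.normSq_pos.2 hσ0⟩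
  -- the quadratic form identity
  have hsv : star v ⬝ᵥ v = ((S : ℝ) : ℂ) := by
    rw [hSdef]
    push_cast
    simp only [dotProduct, Pi.star_apply, RCLike.star_def]
    exact Finset.sum_congr rfl fun σ _ => by rw [mul_comm, Complex.mul_conj]
  have hQ : ((∑ σ : Cfg Λ, diagD Λ lam ω σ * Complex.normSq (v σ) : ℝ) : ℂ)
      - ((((2 * Δ)⁻¹ : ℝ)) : ℂ) * ∑ i ∈ edges Λ, Xq Λ i v = z * ((S : ℝ) : ℂ) := by
    rw [← dot_H, heig, dotProduct_smul, hsv, smul_eq_mul]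
  -- the hopping part is real
  have hXim : (∑ i ∈ edges Λ, Xq Λ i v).im = 0 := by
    rw [← Complex.conj_eq_iff_im, map_sum]
    refine Finset.sum_congr rfl fun i hi => ?_
    rw [edges, Finset.mem_filter] at hi
    exact Xq_conj Λ hi.1 hi.2 v
  -- imaginary part of the eigenvalue
  have him : z.im = 0 := by
    have h1 := congrArg Complex.im hQ
    simp only [Complex.sub_im, Complex.ofReal_im, Complex.mul_im, Complex.ofReal_re, hXim,
      mul_zero, zero_sub, zero_mul, add_zero, zero_add] at h1
    have : z.im * S = 0 := by linarith
    rcases mul_eq_zero.1 this with h | h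
    · exact h
    · exact absurd h hS.ne'
  refine ⟨?_, him⟩
  -- real part of the quadratic form identity
  have hre : (∑ σ : Cfg Λ, diagD Λ lam ω σ * Complex.normSq (v σ))
      - (2 * Δ)⁻¹ * (∑ i ∈ edges Λ, Xq Λ i v).re = z.re * S := by
    have h1 := congrArg Complex.re hQ
    simpa only [Complex.sub_re, Complex.ofReal_re, Complex.mul_re, Complex.ofReal_im, hXim,
      mul_zero, sub_zero, zero_mul] using h1
  -- bound on the hopping part
  have hX : (∑ i ∈ edges Λ, Xq Λ i v).re ≤ ∑ σ : Cfg Λ, eR Λ σ * Complex.normSq (v σ) := by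
    rw [Complex.re_sum]
    calc ∑ i ∈ edges Λ, (Xq Λ i v).re
        ≤ ∑ i ∈ edges Λ, ∑ τ : Cfg Λ,
            (if bocc Λ τ i ≠ bocc Λ τ (i + 1) then Complex.normSq (v τ) else 0) :=
          Finset.sum_le_sum fun i hi => by
            rw [edges, Finset.mem_filter] at hi
            exact Xq_re_le Λ hi.1 hi.2 v
      _ = ∑ τ : Cfg Λ, ∑ i ∈ edges Λ,
            (if bocc Λ τ i ≠ bocc Λ τ (i + 1) then Complex.normSq (v τ) else 0) :=
          Finset.sum_comm
      _ = ∑ σ : Cfg Λ, eR Λ σ * Complex.normSq (v σ) := by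
          refine Finset.sum_congr rfl fun σ _ => ?_
          rw [eR, Finset.sum_mul]
          exact Finset.sum_congr rfl fun i _ => by split_ifs <;> simp
  -- pointwise coefficient bound
  have hpt : ∀ σ : Cfg Λ, (1 - 1 / Δ) * Complex.normSq (v σ)
      ≤ (diagD Λ lam ω σ - (2 * Δ)⁻¹ * eR Λ σ) * Complex.normSq (v σ) := by
    intro σ
    by_cases hσ : σ = botC Λ
    · rw [hσ, hvbot]; simp
    · refine mul_le_mul_of_nonneg_right ?_ (Complex.normSq_nonneg _)
      have hw := one_le_Wr Λ hσ
      have he := eR_le_two_Wr Λ σ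
      have hd := dR_nonneg Λ hlam.le hω σ
      have hi1 : (0:ℝ) < Δ⁻¹ := inv_pos.2 hΔ0
      have hi2 : Δ⁻¹ < 1 := by
        rw [inv_lt_one_iff₀]; right; exact hΔ
      rw [diagD, mul_inv, one_div]
      nlinarith [mul_nonneg (sub_nonneg.2 hw) (sub_nonneg.2 hi2.le),
        mul_nonneg (mul_nonneg (by norm_num : (0:ℝ) ≤ 2⁻¹) hi1.le) (sub_nonneg.2 he)]
  -- combine
  have hsum : (1 - 1 / Δ) * S ≤ z.re * S := by
    rw [← hre]
    have h2 : (2 * Δ)⁻¹ * (∑ i ∈ edges Λ, Xq Λ i v).re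
        ≤ (2 * Δ)⁻¹ * ∑ σ : Cfg Λ, eR Λ σ * Complex.normSq (v σ) :=
      mul_le_mul_of_nonneg_left hX (by positivity)
    have h3 : (1 - 1 / Δ) * S
        ≤ (∑ σ : Cfg Λ, diagD Λ lam ω σ * Complex.normSq (v σ))
          - (2 * Δ)⁻¹ * ∑ σ : Cfg Λ, eR Λ σ * Complex.normSq (v σ) := by
      rw [hSdef, Finset.mul_sum, Finset.mul_sum, ← Finset.sum_sub_distrib]
      refine Finset.sum_le_sum fun σ _ => ?_
      calc (1 - 1 / Δ) * Complex.normSq (v σ)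
          ≤ (diagD Λ lam ω σ - (2 * Δ)⁻¹ * eR Λ σ) * Complex.normSq (v σ) := hpt σ
        _ = diagD Λ lam ω σ * Complex.normSq (v σ)
            - (2 * Δ)⁻¹ * (eR Λ σ * Complex.normSq (v σ)) := by ring
    linarith
  exact (mul_le_mul_iff_of_pos_right hS).1 hsum

end XXZ

namespace XXZ

/-- the form of the spectrum of `H^Λ`: a zero eigenvalue with the
vacuum as eigenvector, and a gap `(0, 1-1/Δ)`. -/
theorem spectrum_gap
    (Λ : Finset ℤ) (hΛ : Λ.Nonempty) (hΛi : IsInterval Λ)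
    (Δ lam : ℝ) (hΔ : 1 < Δ) (hlam : 0 < lam)
    (ω : ℤ → ℝ) (hω : ∀ i ∈ Λ, 0 ≤ ω i) :
    HOp Λ Δ lam ω (vac Λ) = 0 ∧ vac Λ ≠ 0 ∧
    (0 : ℂ) ∈ spectrum ℂ (HOp Λ Δ lam ω) ∧
    spectrum ℂ (HOp Λ Δ lam ω)
      = {0} ∪ {z ∈ spectrum ℂ (HOp Λ Δ lam ω) | 1 - 1 / Δ ≤ z.re ∧ z.im = 0} := by
  have hspec : spectrum ℂ (HOp Λ Δ lam ω) = spectrum ℂ (HonMat Λ Δ lam ω Λ) :=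
    AlgEquiv.spectrum_eq (Matrix.toEuclideanCLM (𝕜 := ℂ) (n := Cfg Λ)) _
  have hvac : HOp Λ Δ lam ω (vac Λ) = 0 := by
    calc HOp Λ Δ lam ω (vac Λ)
        = Matrix.toEuclideanCLM (𝕜 := ℂ) (HonMat Λ Δ lam ω Λ)
          ((WithLp.equiv 2 _).symm (Pi.single (botC Λ) 1)) := rfl
      _ = (WithLp.equiv 2 _).symm (Matrix.toLin' (HonMat Λ Δ lam ω Λ) (Pi.single (botC Λ) 1)) :=
          Matrix.toEuclideanCLM_toLp _ _
      _ = 0 := by rw [Matrix.toLin'_apply, mulVec_single_bot]; rfl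
  have hvacne : vac Λ ≠ 0 := by
    intro h
    have h1 : vac Λ (botC Λ) = 1 := by
      rw [vac, EuclideanSpace.single_apply, if_pos]
      rfl
    rw [h] at h1
    exact one_ne_zero h1.symm
  have hsingle : (Pi.single (botC Λ) (1:ℂ) : Cfg Λ → ℂ) ≠ 0 := by
    intro h
    have := congrFun h (botC Λ)
    simp [Pi.single_apply] at this
  have hzero : (0 : ℂ) ∈ spectrum ℂ (HOp Λ Δ lam ω) := by
    rw [hspec, mem_spec_iff]
    exact ⟨Pi.single (botC Λ) 1, hsingle, by rw [mulVec_single_bot]; simp⟩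
  refine ⟨hvac, hvacne, hzero, ?_⟩
  apply Set.Subset.antisymm
  · intro z hz
    by_cases hz0 : z = 0
    · exact Or.inl hz0
    · refine Or.inr ⟨hz, ?_⟩
      rw [hspec, mem_spec_iff] at hz
      obtain ⟨v, hv0, hv⟩ := hz
      exact eig_bound Λ Δ lam hΔ hlam ω hω z hz0 v hv0 hv
  · rintro z (hz | hz)
    · rw [Set.mem_singleton_iff] at hz
      subst hz
      exact hzero
    · exact hz.1

end XXZ
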